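/- arXiv:0807.3076 — 2 statements merged into one kernel-verified Lean document; each statement's English description precedes it below -/
import Mathlib

section
/- For f, g : ℝ → ℝ continuous and ε > 0, the ε-scale derivative satisfies the generalized Leibniz rule: □_ε(f·g)(x) = □_ε f(x) · g(x) + f(x) · □_ε g(x) + (iε/2)·(□_ε f(x)·□_ε g(x) − conj(□_ε f(x))·□_ε g(x) − □_ε f(x)·conj(□_ε g(x)) − conj(□_ε f(x))·conj(□_ε g(x))). -/
open Filter Topology

noncomputable def deltaP (f : ℝ → ℝ) (ε x : ℝ) : ℝ := (f (x + ε) - f x) / ε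

noncomputable def deltaM (f : ℝ → ℝ) (ε x : ℝ) : ℝ := -(f (x - ε) - f x) / ε

noncomputable def scaleDeriv (f : ℝ → ℝ) (ε x : ℝ) : ℂ :=
  (((deltaP f ε x + deltaM f ε x) / 2 : ℝ) : ℂ)
    - Complex.I * (((deltaP f ε x - deltaM f ε x) / 2 : ℝ) : ℂ)

noncomputable def scaleDerivC (g : ℝ → ℂ) (ε x : ℝ) : ℂ :=
  scaleDeriv (fun t => (g t).re) ε x + Complex.I * scaleDeriv (fun t => (g t).im) ε x

theorem stmt_3 (f g : ℝ → ℝ) (hf : Continuous f) (hg : Continuous g)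
    (ε : ℝ) (hε : 0 < ε) (x : ℝ) :
    scaleDeriv (fun t => f t * g t) ε x =
      scaleDeriv f ε x * (g x : ℂ) + (f x : ℂ) * scaleDeriv g ε x +
        Complex.I * (ε : ℂ) / 2 *
          (scaleDeriv f ε x * scaleDeriv g ε x
            - (starRingEnd ℂ) (scaleDeriv f ε x) * scaleDeriv g ε x
            - scaleDeriv f ε x * (starRingEnd ℂ) (scaleDeriv g ε x)
            - (starRingEnd ℂ) (scaleDeriv f ε x) * (starRingEnd ℂ) (scaleDeriv g ε x)) := by
  have hε' : (ε : ℝ) ≠ 0 := ne_of_gt hε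
  simp only [scaleDeriv, deltaP, deltaM, map_sub, map_mul, Complex.conj_I,
    Complex.conj_ofReal]
  apply Complex.ext <;>
    simp [Complex.add_re, Complex.add_im, Complex.sub_re, Complex.sub_im,
      Complex.mul_re, Complex.mul_im, Complex.I_re, Complex.I_im,
      Complex.ofReal_re, Complex.ofReal_im, Complex.div_re, Complex.div_im,
      Complex.normSq] <;>
    field_simp <;> ring
end

section
/- Let f(x) = |x| and ε > 0. For all x with |x| ≥ ε, the ε-scale derivative □_ε f(x) is real and equals sign(x); for |x| < ε it has nonzero imaginary part equal to −(ε−|x|)/ε. Consequently, □_ε f(x) → sign(x) pointwise as ε → 0⁺ for every x ≠ 0, while □_ε f(0) = −i for every ε > 0. -/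
open Filter Topology

lemma key (ε x : ℝ) (hε : 0 < ε) (h : ε ≤ |x|) :
    scaleDeriv (fun t => |t|) ε x = ((Real.sign x : ℝ) : ℂ) := by
  rcases lt_or_gt_of_ne (fun hx : x = 0 => by simp [hx] at h; linarith) with hx | hx
  · have h1 : x ≤ -ε := by rw [abs_of_neg hx] at h; linarith
    have e1 : |x + ε| = -(x + ε) := abs_of_nonpos (by linarith)
    have e2 : |x - ε| = -(x - ε) := abs_of_nonpos (by linarith)
    have e3 : |x| = -x := abs_of_neg hx
    simp only [scaleDeriv, deltaP, deltaM, e1, e2, e3, Real.sign_of_neg hx]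
    have : (-(x + ε) - -x) / ε = -1 := by field_simp; ring
    rw [this]
    have : -(-(x - ε) - -x) / ε = -1 := by field_simp; ring
    rw [this]
    norm_num
  · have h1 : ε ≤ x := by rwa [abs_of_pos hx] at h
    have e1 : |x + ε| = x + ε := abs_of_pos (by linarith)
    have e2 : |x - ε| = x - ε := abs_of_nonneg (by linarith)
    have e3 : |x| = x := abs_of_pos hx
    simp only [scaleDeriv, deltaP, deltaM, e1, e2, e3, Real.sign_of_pos hx]
    have : (x + ε - x) / ε = 1 := by field_simp; ring
    rw [this]
    have : -(x - ε - x) / ε = 1 := by field_simp; ring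
    rw [this]
    norm_num

theorem stmt_17 (ε : ℝ) (hε : 0 < ε) :
    (∀ x : ℝ, ε ≤ |x| → scaleDeriv (fun t => |t|) ε x = ((Real.sign x : ℝ) : ℂ)) ∧
    (∀ x : ℝ, |x| < ε → (scaleDeriv (fun t => |t|) ε x).im = -((ε - |x|) / ε)) ∧
    (∀ x : ℝ, x ≠ 0 →
      Tendsto (fun e => scaleDeriv (fun t => |t|) e x) (𝓝[>] 0)
        (𝓝 ((Real.sign x : ℝ) : ℂ))) ∧
    scaleDeriv (fun t => |t|) ε 0 = -Complex.I := by
  refine ⟨fun x hx => key ε x hε hx, fun x hx => ?_, fun x hx => ?_, ?_⟩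
  · have e1 : |x + ε| = x + ε := abs_of_nonneg (by cases abs_cases x <;> linarith)
    have e2 : |x - ε| = ε - x := by
      rw [abs_sub_comm]; exact abs_of_nonneg (by cases abs_cases x <;> linarith)
    simp only [scaleDeriv, deltaP, deltaM, e1, e2, Complex.sub_im, Complex.ofReal_im,
      Complex.mul_im, Complex.I_re, Complex.I_im, Complex.ofReal_re]
    field_simp
    ring
  · have habs : 0 < |x| := abs_pos.mpr hx
    have : ∀ᶠ e in 𝓝[>] (0:ℝ), scaleDeriv (fun t => |t|) e x = ((Real.sign x : ℝ) : ℂ) := by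
      filter_upwards [Ioo_mem_nhdsGT_of_mem ⟨le_refl 0, habs⟩] with e he
      exact key e x he.1 he.2.le
    rw [tendsto_congr' this]
    exact tendsto_const_nhds
  · have e1 : |(0:ℝ) + ε| = ε := by rw [zero_add, abs_of_pos hε]
    have e2 : |(0:ℝ) - ε| = ε := by rw [zero_sub, abs_neg, abs_of_pos hε]
    simp only [scaleDeriv, deltaP, deltaM, e1, e2, abs_zero, sub_zero]
    rw [div_self hε.ne', neg_div, div_self hε.ne']
    norm_num
end
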